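/- Let V be a real inner product space, let c > 0 and b > 0, and let λ_τ, u̇_τ ∈ V satisfy b·(λ_τ + c·u̇_τ) = max(b, ‖λ_τ + c·u̇_τ‖)·λ_τ. Then ‖λ_τ‖ ≤ b; i.e. any solution of the tangential complementarity equation with positive friction bound automatically respects the Coulomb friction bound. -/

import Mathlib

/-- Any solution of the tangential complementarity equation with positive
friction bound automatically respects the Coulomb friction bound `‖λ_τ‖ ≤ b`. -/
theorem tangential_complementarity_respects_friction_bound
    {V : Type*} [NormedAddCommGroup V] [InnerProductSpace ℝ V]
    (c b : ℝ) (hc : 0 < c) (hb : 0 < b) (lamT udotT : V)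
    (heq : b • (lamT + c • udotT) = (max b ‖lamT + c • udotT‖) • lamT) :
    ‖lamT‖ ≤ b := by
  set w := lamT + c • udotT with hw
  set m := max b ‖w‖ with hm
  have hmpos : 0 < m := lt_of_lt_of_le hb (le_max_left _ _)
  have hnorm : b * ‖w‖ = m * ‖lamT‖ := by
    have := congrArg norm heq
    simpa [norm_smul, abs_of_pos hb, abs_of_pos hmpos] using this
  have hle : m * ‖lamT‖ ≤ b * m := by
    rw [← hnorm]
    exact mul_le_mul_of_nonneg_left (le_max_right _ _) hb.le
  have := (mul_le_mul_iff_right₀ hmpos).mp (by linarith [hle] : m * ‖lamT‖ ≤ m * b)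
  exact this
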